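/- Let B = {s₁,…,s_n} ⊂ ℝ^d (with the standard Euclidean inner product) be a finite set of n distinct unit-norm vectors (‖s_i‖ = 1) with B ∩ (−B) = ∅, and let A := B ∪ (−B) (so A is symmetric with 2n elements). Define the cumulative coherence μ(B, m) := max over subsets I ⊆ B with |I| = m of max over s ∈ B \ I of Σ_{s'∈I} |⟪s, s'⟫|, for 0 ≤ m < n. Then μ(B, n − 1) ≥ 1 − n·mDW(A)². -/

import Mathlib

open scoped RealInnerProductSpace Pointwise

/-- Directional width of a set `A` in direction `d`: `W_A(d) = sup_{z ∈ A} ⟪d / ‖d‖, z⟫`. -/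
noncomputable def dirWidth {H : Type*} [NormedAddCommGroup H] [InnerProductSpace ℝ H]
    (A : Set H) (d : H) : ℝ :=
  sSup ((fun z => ⟪(‖d‖)⁻¹ • d, z⟫) '' A)

/-- Minimal intrinsic directional width of `A`. -/
noncomputable def mDW {H : Type*} [NormedAddCommGroup H] [InnerProductSpace ℝ H]
    (A : Set H) : ℝ :=
  sInf (dirWidth A '' {d | d ∈ Submodule.span ℝ A ∧ d ≠ 0})

/-- Cumulative coherence `μ(B, m)` of a finite dictionary `B`. -/
noncomputable def cumCoherence {H : Type*} [NormedAddCommGroup H] [InnerProductSpace ℝ H]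
    (B : Finset H) (m : ℕ) : ℝ :=
  sSup {x : ℝ | ∃ I ⊆ B, I.card = m ∧ ∃ s ∈ B, s ∉ I ∧ x = ∑ s' ∈ I, |⟪s, s'⟫|}

/-- Lower bound on the cumulative coherence in terms of the minimal intrinsic directional
width (Theorem 5 / `thm:coherenceVSdw`). -/
theorem cumCoherence_ge_one_sub_card_mul_mDW_sq
    {d : ℕ} (B : Finset (EuclideanSpace ℝ (Fin d))) (n : ℕ)
    (hcard : B.card = n) (hn : 1 ≤ n)
    (hunit : ∀ s ∈ B, ‖s‖ = 1)
    (hdisj : (B : Set (EuclideanSpace ℝ (Fin d))) ∩ (-(B : Set (EuclideanSpace ℝ (Fin d)))) = ∅) :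
    1 - (n : ℝ) * (mDW ((B : Set (EuclideanSpace ℝ (Fin d))) ∪
        (-(B : Set (EuclideanSpace ℝ (Fin d)))))) ^ 2 ≤ cumCoherence B (n - 1) := by
  classical
  set A : Set (EuclideanSpace ℝ (Fin d)) :=
    (B : Set (EuclideanSpace ℝ (Fin d))) ∪ (-(B : Set (EuclideanSpace ℝ (Fin d)))) with hA
  set μ := cumCoherence B (n - 1) with hμdef
  have hBne : B.Nonempty := Finset.card_pos.mp (by omega)
  obtain ⟨s₀, hs₀⟩ := hBne
  have hAnorm : ∀ z ∈ A, ‖z‖ = 1 := by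
    rintro z (hz | hz)
    · exact hunit z hz
    · rw [Set.mem_neg] at hz
      rw [← norm_neg]; exact hunit _ hz
  have hbdd : ∀ v : EuclideanSpace ℝ (Fin d),
      BddAbove ((fun z => ⟪(‖v‖)⁻¹ • v, z⟫) '' A) := by
    intro v
    refine ⟨‖(‖v‖)⁻¹ • v‖, ?_⟩
    rintro x ⟨z, hz, rfl⟩
    calc ⟪(‖v‖)⁻¹ • v, z⟫ ≤ ‖(‖v‖)⁻¹ • v‖ * ‖z‖ := real_inner_le_norm _ _
      _ = ‖(‖v‖)⁻¹ • v‖ := by rw [hAnorm z hz, mul_one]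
  have habs : ∀ (v : EuclideanSpace ℝ (Fin d)), ∀ s ∈ B,
      |⟪(‖v‖)⁻¹ • v, s⟫| ≤ dirWidth A v := by
    intro v s hs
    rw [abs_le]
    constructor
    · have h1 : ⟪(‖v‖)⁻¹ • v, -s⟫ ≤ dirWidth A v :=
        le_csSup (hbdd v) ⟨-s, Or.inr (by simpa using hs), rfl⟩
      rw [inner_neg_right] at h1
      linarith
    · exact le_csSup (hbdd v) ⟨s, Or.inl hs, rfl⟩
  have hW0 : ∀ v, 0 ≤ dirWidth A v := fun v =>
    le_trans (abs_nonneg _) (habs v s₀ hs₀)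
  -- coherence facts
  have hSbdd : BddAbove {x : ℝ | ∃ I ⊆ B, I.card = n - 1 ∧
      ∃ s ∈ B, s ∉ I ∧ x = ∑ s' ∈ I, |⟪s, s'⟫|} := by
    refine ⟨n, ?_⟩
    rintro x ⟨I, hIB, hIc, s, hsB, hsI, rfl⟩
    calc ∑ s' ∈ I, |⟪s, s'⟫| ≤ ∑ s' ∈ I, 1 := by
          refine Finset.sum_le_sum fun s' hs' => ?_
          calc |⟪s, s'⟫| ≤ ‖s‖ * ‖s'‖ := abs_real_inner_le_norm _ _
            _ = 1 := by rw [hunit s hsB, hunit s' (hIB hs'), mul_one]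
      _ = (I.card : ℝ) := by simp
      _ ≤ n := by exact_mod_cast Nat.le_of_eq hIc |>.trans (Nat.sub_le n 1)
  have hmem : ∀ s ∈ B, (∑ s' ∈ B.erase s, |⟪s, s'⟫|) ≤ μ := by
    intro s hs
    apply le_csSup hSbdd
    exact ⟨B.erase s, Finset.erase_subset _ _,
      by rw [Finset.card_erase_of_mem hs, hcard], s, hs, Finset.notMem_erase _ _, rfl⟩
  have hμ0 : 0 ≤ μ :=
    le_trans (Finset.sum_nonneg fun _ _ => abs_nonneg _) (hmem s₀ hs₀)
  have hspan : Submodule.span ℝ A = Submodule.span ℝ (B : Set (EuclideanSpace ℝ (Fin d))) := by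
    rw [hA, Submodule.span_union, Submodule.span_neg, sup_idem]
  -- main claim
  have key : ∀ v ∈ Submodule.span ℝ A, v ≠ 0 → (1 - μ) / n ≤ (dirWidth A v) ^ 2 := by
    intro v hv hv0
    by_cases hμ1 : 1 ≤ μ
    · calc (1 - μ) / n ≤ 0 := div_nonpos_iff.mpr (Or.inr ⟨by linarith, n.cast_nonneg⟩)
        _ ≤ _ := sq_nonneg _
    push_neg at hμ1
    set u := (‖v‖)⁻¹ • v with hu
    have hun : ‖u‖ = 1 := norm_smul_inv_norm hv0
    have huspan : u ∈ Submodule.span ℝ (B : Set (EuclideanSpace ℝ (Fin d))) := by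
      rw [← hspan]; exact Submodule.smul_mem _ _ hv
    obtain ⟨g, -, hg⟩ := Submodule.mem_span_finset.mp huspan
    obtain ⟨s₁, hs₁B, hs₁max⟩ := B.exists_max_image (fun s => |g s|) ⟨s₀, hs₀⟩
    set M := |g s₁| with hM
    set W := dirWidth A v with hWd
    have hWs : ∀ s ∈ B, |⟪u, s⟫| ≤ W := habs v
    have hWnn : 0 ≤ W := hW0 v
    have h1 : (1 : ℝ) ≤ n * (M * W) := by
      have huu : ⟪u, u⟫ = 1 := by
        rw [real_inner_self_eq_norm_sq, hun]; norm_num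
      calc (1 : ℝ) = ⟪u, u⟫ := huu.symm
        _ = ∑ s ∈ B, g s * ⟪u, s⟫ := by
            conv_lhs => rw [← hg]
            rw [inner_sum]
            refine Finset.sum_congr rfl fun s _ => ?_
            rw [real_inner_smul_right, hg]
        _ ≤ ∑ s ∈ B, |g s * ⟪u, s⟫| := Finset.sum_le_sum fun s _ => le_abs_self _
        _ = ∑ s ∈ B, |g s| * |⟪u, s⟫| := by simp [abs_mul]
        _ ≤ ∑ s ∈ B, M * W := Finset.sum_le_sum fun s hs =>
            mul_le_mul (hs₁max s hs) (hWs s hs) (abs_nonneg _) (abs_nonneg _)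
        _ = n * (M * W) := by rw [Finset.sum_const, hcard, nsmul_eq_mul]
    have h2 : M * (1 - μ) ≤ W := by
      have hinner : ⟪u, s₁⟫ = g s₁ + ∑ s ∈ B.erase s₁, g s * ⟪s, s₁⟫ := by
        conv_lhs => rw [← hg]
        rw [sum_inner, ← Finset.add_sum_erase B _ hs₁B]
        have hss : (⟪g s₁ • s₁, s₁⟫ : ℝ) = g s₁ := by
          rw [real_inner_smul_left, real_inner_self_eq_norm_sq, hunit s₁ hs₁B]
          norm_num
        rw [hss]
        congr 1
        exact Finset.sum_congr rfl fun s _ => real_inner_smul_left _ _ _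
      have hMle : M ≤ W + M * μ := by
        have e1 : M = |⟪u, s₁⟫ - ∑ s ∈ B.erase s₁, g s * ⟪s, s₁⟫| := by
          rw [hinner]; ring_nf; exact hM
        have e2 : |⟪u, s₁⟫ - ∑ s ∈ B.erase s₁, g s * ⟪s, s₁⟫|
            ≤ |⟪u, s₁⟫| + |∑ s ∈ B.erase s₁, g s * ⟪s, s₁⟫| := abs_sub _ _
        have e3 : |∑ s ∈ B.erase s₁, g s * ⟪s, s₁⟫|
            ≤ ∑ s ∈ B.erase s₁, M * |⟪s₁, s⟫| := by
          calc |∑ s ∈ B.erase s₁, g s * ⟪s, s₁⟫| ≤ ∑ s ∈ B.erase s₁, |g s * ⟪s, s₁⟫| :=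
                Finset.abs_sum_le_sum_abs _ _
            _ ≤ ∑ s ∈ B.erase s₁, M * |⟪s₁, s⟫| := by
                refine Finset.sum_le_sum fun s hs => ?_
                rw [abs_mul, real_inner_comm]
                exact mul_le_mul_of_nonneg_right
                  (hs₁max s (Finset.mem_of_mem_erase hs)) (abs_nonneg _)
        have e4 : ∑ s ∈ B.erase s₁, M * |⟪s₁, s⟫| ≤ M * μ := by
          rw [← Finset.mul_sum]
          exact mul_le_mul_of_nonneg_left (hmem s₁ hs₁B) (abs_nonneg _)
        have e5 : |⟪u, s₁⟫| ≤ W := hWs s₁ hs₁B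
        calc M = |⟪u, s₁⟫ - ∑ s ∈ B.erase s₁, g s * ⟪s, s₁⟫| := e1
          _ ≤ |⟪u, s₁⟫| + |∑ s ∈ B.erase s₁, g s * ⟪s, s₁⟫| := e2
          _ ≤ W + M * μ := by linarith [e3.trans e4]
      nlinarith
    have hMnn : (0:ℝ) ≤ M := abs_nonneg _
    have hnn : (0:ℝ) < n := by exact_mod_cast hn
    rw [div_le_iff₀ hnn]
    nlinarith [mul_le_mul_of_nonneg_left h2 (mul_nonneg hnn.le hWnn),
      mul_le_mul_of_nonneg_left h1 (show (0:ℝ) ≤ 1 - μ by linarith)]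
  -- conclude
  have hs₀ne : (s₀ : EuclideanSpace ℝ (Fin d)) ≠ 0 := by
    intro h
    have := hunit s₀ hs₀
    rw [h, norm_zero] at this
    norm_num at this
  have hmDW : Real.sqrt ((1 - μ) / n) ≤ mDW A := by
    apply le_csInf
    · exact ⟨dirWidth A s₀, s₀, ⟨Submodule.subset_span (Or.inl hs₀), hs₀ne⟩, rfl⟩
    · rintro x ⟨v, ⟨hv, hv0⟩, rfl⟩
      calc Real.sqrt ((1 - μ) / n) ≤ Real.sqrt ((dirWidth A v) ^ 2) :=
            Real.sqrt_le_sqrt (key v hv hv0)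
        _ = dirWidth A v := Real.sqrt_sq (hW0 v)
  have hfin : (1 - μ) / n ≤ (mDW A) ^ 2 := by
    rcases le_or_gt 0 ((1 - μ) / n) with h | h
    · have h0 : 0 ≤ mDW A := le_trans (Real.sqrt_nonneg _) hmDW
      calc (1 - μ) / n = (Real.sqrt ((1 - μ) / n)) ^ 2 := (Real.sq_sqrt h).symm
        _ ≤ (mDW A) ^ 2 := pow_le_pow_left₀ (Real.sqrt_nonneg _) hmDW 2
    · exact h.le.trans (sq_nonneg _)
  have hnn : (0:ℝ) < n := by exact_mod_cast hn
  rw [div_le_iff₀ hnn] at hfin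
  nlinarith [hfin]
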